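/- Let M be a set (or type), let ρ : M → M be an involution (ρ ∘ ρ = id), let φ : M → M be a bijection with φ(Fix(ρ)) ∩ Fix(ρ) = ∅, and set ψ = φ ∘ ρ ∘ φ⁻¹ ∘ ρ. If the fixed point set Fix(ψ) is finite, then its cardinality is even. -/
import Mathlib

open Classical in
lemma even_card_of_free_involution {α : Type*} (f : α → α) :
    ∀ s : Finset α, (∀ x ∈ s, f x ∈ s) → (∀ x ∈ s, f (f x) = x) →
      (∀ x ∈ s, f x ≠ x) → Even s.card := by
  intro s
  induction s using Finset.strongInduction with
  | _ s ih =>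
    intro hcl hinv hfree
    rcases s.eq_empty_or_nonempty with rfl | ⟨x, hx⟩
    · simp
    · have hfx : f x ∈ s := hcl x hx
      have hne : f x ≠ x := hfree x hx
      set t := (s.erase x).erase (f x) with ht
      have hts : t ⊂ s := by
        refine Finset.ssubset_of_subset_of_ssubset ?_ (Finset.erase_ssubset hx)
        exact Finset.erase_subset _ _
      have hmem : ∀ y, y ∈ t ↔ y ∈ s ∧ y ≠ x ∧ y ≠ f x := by
        intro y
        simp [ht, Finset.mem_erase]
        tauto
      have hcard : s.card = t.card + 2 := by
        have h1 : (s.erase x).card + 1 = s.card := Finset.card_erase_add_one hx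
        have h2 : t.card + 1 = (s.erase x).card :=
          Finset.card_erase_add_one (Finset.mem_erase.mpr ⟨hne, hfx⟩)
        omega
      have := ih t hts
        (fun y hy => by
          rw [hmem] at hy ⊢
          refine ⟨hcl y hy.1, ?_, ?_⟩
          · intro h
            apply hy.2.2
            have := congrArg f h
            rw [hinv y hy.1] at this
            exact this
          · intro h
            have := congrArg f h
            rw [hinv y hy.1, hinv x hx] at this
            exact hy.2.1 this)
        (fun y hy => hinv y ((hmem y).mp hy).1)
        (fun y hy => hfree y ((hmem y).mp hy).1)
      obtain ⟨k, hk⟩ := this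
      exact ⟨k + 1, by omega⟩

/-- Let `M` be a type, `ρ : M → M` an involution (`ρ ∘ ρ = id`), `φ : M ≃ M` a
bijection with `φ(Fix ρ) ∩ Fix ρ = ∅`, and set `ψ = φ ∘ ρ ∘ φ.symm ∘ ρ`.
If the fixed point set `Fix ψ` is finite, then its cardinality is even. -/
theorem even_ncard_fixedPoints {M : Type*} (ρ : M → M) (hρ : ρ ∘ ρ = id)
    (φ : M ≃ M) (hdisp : (φ '' {x | ρ x = x}) ∩ {x | ρ x = x} = ∅)
    (ψ : M → M) (hψ : ψ = φ ∘ ρ ∘ φ.symm ∘ ρ)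
    (hfin : {x | ψ x = x}.Finite) :
    Even {x | ψ x = x}.ncard := by
  classical
  have hρ' : ∀ x, ρ (ρ x) = x := fun x => congrFun hρ x
  have hψ' : ∀ x, ψ x = φ (ρ (φ.symm (ρ x))) := fun x => by rw [hψ]; rfl
  rw [Set.ncard_eq_toFinset_card _ hfin]
  have hmem : ∀ x, x ∈ hfin.toFinset ↔ ψ x = x := by
    intro x; rw [Set.Finite.mem_toFinset]; rfl
  apply even_card_of_free_involution ρ
  · -- closed
    intro x hx
    rw [hmem] at hx ⊢
    have h1 : φ (ρ (φ.symm (ρ x))) = x := by rw [← hψ' x, hx]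
    have h2 : ρ (φ.symm (ρ x)) = φ.symm x := by
      apply φ.injective; rw [h1, Equiv.apply_symm_apply]
    have h3 : φ.symm (ρ x) = ρ (φ.symm x) := by rw [← h2, hρ']
    rw [hψ' (ρ x), hρ', ← h3, Equiv.apply_symm_apply]
  · intro x _; exact hρ' x
  · -- free
    intro x hx hfix
    rw [hmem] at hx
    rw [hψ' x, hfix] at hx
    have h4 : ρ (φ.symm x) = φ.symm x := by
      apply φ.injective; rw [hx, Equiv.apply_symm_apply]
    have : x ∈ (φ '' {x | ρ x = x}) ∩ {x | ρ x = x} :=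
      ⟨⟨φ.symm x, h4, Equiv.apply_symm_apply _ _⟩, hfix⟩
    rw [hdisp] at this
    exact this
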